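/- There exist c > 0 and n₀ ∈ ℕ such that for all n ≥ n₀ the following holds: whenever t ∈ ℕ and x⁽¹⁾, …, x⁽ᵗ⁾ ∈ {0, …, n−1}^n are such that the map sending z ∈ {0, …, n−1}^n to the vector (f_z(x⁽¹⁾), …, f_z(x⁽ᵗ⁾)) is injective, one has t ≥ c·n·log n (natural logarithm). In other words, any non-adaptive identification scheme for the Mastermind problem with n positions and n colors requires at least c·n·log n queries. -/

import Mathlib

/-- The Mastermind function: `MM z x` is the number of positions in which `x`
agrees with the secret string `z`. -/
def MM {n k : ℕ} (z x : Fin n → Fin k) : ℕ :=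
  (Finset.univ.filter fun j => x j = z j).card

open Finset

lemma count_one {n : ℕ} (c : Fin n) (j : Fin n) :
    (∑ z : Fin n → Fin n, if c = z j then (1:ℕ) else 0) = n ^ (n-1) := by
  rw [← Equiv.sum_comp (Equiv.funSplitAt j (Fin n)).symm]
  simp only [Equiv.funSplitAt_symm_apply, dif_pos rfl]
  rw [Fintype.sum_prod_type]
  simp [Finset.sum_ite_eq, Fintype.card_fun]

lemma sum_MM {n : ℕ} (hn : 1 ≤ n) (x : Fin n → Fin n) :
    ∑ z : Fin n → Fin n, MM z x = n ^ n := by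
  have h1 : ∀ z : Fin n → Fin n, MM z x = ∑ j : Fin n, if x j = z j then 1 else 0 := by
    intro z; rw [MM, Finset.card_filter]
  simp_rw [h1]
  rw [Finset.sum_comm]
  have : ∀ j : Fin n, (∑ z : Fin n → Fin n, if x j = z j then (1:ℕ) else 0) = n^(n-1) :=
    fun j => count_one (x j) j
  simp_rw [this]
  rw [Finset.sum_const, Finset.card_univ, Fintype.card_fin, smul_eq_mul, ← pow_succ']
  congr 1
  omega

lemma partialSum_strictMono {t : ℕ} (a : Fin t → ℕ) :
    StrictMono (fun i : Fin t => ∑ j ∈ Finset.univ.filter (· ≤ i), (a j + 1)) := by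
  intro i i' h
  apply Finset.sum_lt_sum_of_subset (i := i')
  · intro j hj
    simp only [Finset.mem_filter, Finset.mem_univ, true_and] at *
    exact hj.trans h.le
  · simp
  · simp [not_le.2 h]
  · omega
  · intro j _ _; omega

lemma eq_of_partialSums {t : ℕ} (a b : Fin t → ℕ)
    (h : ∀ i : Fin t, (∑ j ∈ Finset.univ.filter (· ≤ i), (a j + 1))
        = ∑ j ∈ Finset.univ.filter (· ≤ i), (b j + 1)) : a = b := by
  have key : ∀ m : ℕ, ∀ i : Fin t, (i : ℕ) = m → a i = b i := by
    intro m
    induction m using Nat.strong_induction_on with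
    | _ m ih =>
      intro i him
      have hsplit : Finset.univ.filter (· ≤ i) = insert i (Finset.univ.filter (· < i)) := by
        ext j
        simp [le_iff_lt_or_eq, or_comm]
      have hi : i ∉ Finset.univ.filter (· < i) := by simp
      have hlt : (∑ j ∈ Finset.univ.filter (· < i), (a j + 1))
          = ∑ j ∈ Finset.univ.filter (· < i), (b j + 1) := by
        apply Finset.sum_congr rfl
        intro j hj
        simp only [Finset.mem_filter, Finset.mem_univ, true_and] at hj
        have := ih j.val (by rw [← him]; exact hj) j rfl
        omega
      have hiq := h i
      rw [hsplit, Finset.sum_insert hi, Finset.sum_insert hi, hlt] at hiq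
      omega
  funext i
  exact key i.val i rfl

/-- Any non-adaptive identification scheme for Mastermind with `n` positions and
`n` colors requires `Ω(n log n)` queries. -/
theorem stmt11 : ∃ c > (0 : ℝ), ∃ n₀ : ℕ, ∀ n : ℕ, n₀ ≤ n →
    ∀ (t : ℕ) (x : Fin t → (Fin n → Fin n)),
      Function.Injective (fun z : Fin n → Fin n => fun i : Fin t => MM z (x i)) →
      c * n * Real.log n ≤ t := by
  refine ⟨1/5, by norm_num, 2, ?_⟩
  intro n hn t x hinj
  -- t = 0 is impossible
  rcases Nat.eq_zero_or_pos t with rfl | ht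
  · exfalso
    have h01 : (fun _ : Fin n => (⟨0, by omega⟩ : Fin n)) = (fun _ => ⟨1, by omega⟩) :=
      hinj (funext fun i => i.elim0)
    have := congrFun h01 ⟨0, by omega⟩
    simp [Fin.mk.injEq] at this
  -- counting argument
  set S : Finset (Fin n → Fin n) :=
    Finset.univ.filter (fun z => ∑ i, MM z (x i) ≤ 2*t) with hSdef
  set Sc : Finset (Fin n → Fin n) :=
    Finset.univ.filter (fun z => ¬ (∑ i, MM z (x i) ≤ 2*t)) with hScdef
  have htotal : ∑ z : Fin n → Fin n, ∑ i, MM z (x i) = t * n^n := by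
    rw [Finset.sum_comm]
    have : ∀ i : Fin t, ∑ z : Fin n → Fin n, MM z (x i) = n^n :=
      fun i => sum_MM (by omega) (x i)
    simp_rw [this]
    simp [mul_comm]
  have hcards : S.card + Sc.card = n^n := by
    rw [hSdef, hScdef, Finset.card_filter_add_card_filter_not]
    simp [Fintype.card_fun]
  have hSc2 : 2 * Sc.card ≤ n^n := by
    have h1 : (2*t+1) * Sc.card ≤ t * n^n := by
      rw [← htotal]
      calc (2*t+1) * Sc.card = Sc.card • (2*t+1) := by rw [smul_eq_mul]; ring
        _ ≤ ∑ z ∈ Sc, ∑ i, MM z (x i) := by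
            apply Finset.card_nsmul_le_sum
            intro z hz
            rw [hScdef] at hz
            simp only [Finset.mem_filter, Finset.mem_univ, true_and] at hz
            omega
        _ ≤ ∑ z : Fin n → Fin n, ∑ i, MM z (x i) :=
            Finset.sum_le_sum_of_subset (Finset.subset_univ _)
    nlinarith [h1, Nat.le_refl 0]
  have hS2 : n^n ≤ 2 * S.card := by omega
  -- encode elements of S into subsets of range (3t+1)
  have hScard : S.card ≤ 2^(3*t+1) := by
    have := Finset.card_le_card_of_injOn
      (f := fun z : Fin n → Fin n => Finset.image
        (fun i : Fin t => ∑ j ∈ Finset.univ.filter (· ≤ i), (MM z (x j) + 1)) Finset.univ)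
      (s := S) (t := (Finset.range (3*t+1)).powerset) ?_ ?_
    · simpa using this
    · -- maps to powerset
      intro z hz
      rw [hSdef] at hz
      simp only [Finset.mem_coe, Finset.mem_filter, Finset.mem_univ, true_and] at hz
      simp only [Finset.mem_coe, Finset.mem_powerset]
      intro v hv
      simp only [Finset.mem_image, Finset.mem_univ, true_and] at hv
      obtain ⟨i, rfl⟩ := hv
      rw [Finset.mem_range]
      calc (∑ j ∈ Finset.univ.filter (· ≤ i), (MM z (x j) + 1))
          ≤ ∑ j : Fin t, (MM z (x j) + 1) :=
            Finset.sum_le_sum_of_subset (Finset.filter_subset _ _)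
        _ = (∑ j, MM z (x j)) + t := by
            rw [Finset.sum_add_distrib]; simp
        _ < 3*t+1 := by omega
    · -- injective on S
      intro z hz z' hz' heq
      apply hinj
      have heq' : (Finset.image (fun i : Fin t => ∑ j ∈ Finset.univ.filter (· ≤ i), (MM z (x j) + 1)) Finset.univ)
          = Finset.image (fun i : Fin t => ∑ j ∈ Finset.univ.filter (· ≤ i), (MM z' (x j) + 1)) Finset.univ := heq
      have ha := partialSum_strictMono (fun i => MM z (x i))
      have hb := partialSum_strictMono (fun i => MM z' (x i))
      set F := Finset.image
        (fun i : Fin t => ∑ j ∈ Finset.univ.filter (· ≤ i), (MM z (x j) + 1)) Finset.univ with hF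
      have hcard : F.card = t := by
        rw [hF, Finset.card_image_of_injective _ ha.injective]
        simp
      have h1 := Finset.orderEmbOfFin_unique hcard
        (f := fun i : Fin t => ∑ j ∈ Finset.univ.filter (· ≤ i), (MM z (x j) + 1))
        (fun i => by rw [hF]; exact Finset.mem_image_of_mem _ (Finset.mem_univ i)) ha
      have h2 := Finset.orderEmbOfFin_unique hcard
        (f := fun i : Fin t => ∑ j ∈ Finset.univ.filter (· ≤ i), (MM z' (x j) + 1))
        (fun i => by rw [heq']; exact Finset.mem_image_of_mem _ (Finset.mem_univ i)) hb
      have habs : (fun i => MM z (x i)) = (fun i => MM z' (x i)) := by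
        apply eq_of_partialSums
        intro i
        rw [show (∑ j ∈ Finset.univ.filter (· ≤ i), (MM z (x j) + 1)) = _ from congrFun h1 i,
            show (∑ j ∈ Finset.univ.filter (· ≤ i), (MM z' (x j) + 1)) = _ from congrFun h2 i]
      exact habs
  -- combine counts: n^n ≤ 2^(3t+2)
  have hpow : n^n ≤ 2^(3*t+2) := by
    calc n^n ≤ 2 * S.card := hS2
      _ ≤ 2 * 2^(3*t+1) := by omega
      _ = 2^(3*t+2) := by ring
  -- pass to reals
  have hR : ((n:ℝ))^n ≤ (2:ℝ)^(3*t+2) := by exact_mod_cast hpow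
  have hlog : (n:ℝ) * Real.log n ≤ (3*t+2 : ℝ) * Real.log 2 := by
    have h := Real.log_le_log (by positivity) hR
    rw [Real.log_pow, Real.log_pow] at h
    push_cast at h ⊢
    exact h
  have hlog2 : Real.log 2 ≤ 1 := by
    have := Real.log_le_sub_one_of_pos (by norm_num : (0:ℝ) < 2)
    linarith
  have hfin : (n:ℝ) * Real.log n ≤ 5 * t := by
    have h2 : (3*t+2 : ℝ) * Real.log 2 ≤ (3*t+2 : ℝ) := by
      have hpos : (0:ℝ) ≤ 3*t+2 := by positivity
      nlinarith [Real.log_nonneg (by norm_num : (1:ℝ) ≤ 2)]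
    have h3 : (3*t+2 : ℝ) ≤ 5 * t := by
      have : (1:ℝ) ≤ t := by exact_mod_cast ht
      linarith
    linarith
  linarith
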